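/- Let ν > 1, s_U = ν/(1+ν), s_Y = (1/2)·√(2ν/(ν+1)), and let s_I be the unique root in [0,1] of P(s) = 2s³ - 3s² + s_U. Then P(s_Y) = (s_U/2)·(√(2·s_U) - 1) > 0 and consequently s_Y < s_I < s_U. -/
import Mathlib

lemma cubic_anti (sU x y : ℝ) (hx : 0 ≤ x) (hy : y ≤ 1) (hxy : x ≤ y) :
    2*y^3 - 3*y^2 + sU ≤ 2*x^3 - 3*x^2 + sU := by
  nlinarith [mul_nonneg (sub_nonneg.2 hxy) (mul_nonneg hx (sub_nonneg.2 hy)),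
    mul_nonneg (sub_nonneg.2 hxy) (mul_nonneg (le_trans hx hxy) (sub_nonneg.2 hy)),
    mul_nonneg (sub_nonneg.2 hxy) (mul_nonneg hx (sub_nonneg.2 (le_trans hxy hy)))]

theorem stmt_6 (ν : ℝ) (hν : 1 < ν)
    (sU sY sI : ℝ)
    (hsU : sU = ν / (1 + ν))
    (hsY : sY = (1/2) * Real.sqrt (2*ν/(ν+1)))
    (P : ℝ → ℝ) (hP : ∀ s, P s = 2*s^3 - 3*s^2 + sU)
    (hI : sI ∈ Set.Icc (0:ℝ) 1) (hIroot : P sI = 0) :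
    P sY = (sU/2) * (Real.sqrt (2*sU) - 1) ∧ 0 < P sY ∧ sY < sI ∧ sI < sU := by
  obtain ⟨hI0, hI1⟩ := hI
  have hν0 : (0:ℝ) < 1 + ν := by linarith
  have hsU1 : sU < 1 := by rw [hsU, div_lt_one hν0]; linarith
  have hsUh : 1/2 < sU := by rw [hsU, lt_div_iff₀ hν0]; linarith
  set r := Real.sqrt (2*sU) with hr
  have hrsq : r^2 = 2*sU := Real.sq_sqrt (by linarith)
  have hr0 : 0 ≤ r := Real.sqrt_nonneg _
  have hr1 : 1 < r := by nlinarith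
  have hr2 : r < 2 := by nlinarith
  have harg : 2*ν/(ν+1) = 2*sU := by
    rw [hsU]; field_simp; ring
  have hsY' : sY = r/2 := by rw [hsY, harg, hr]; ring
  have hsY0 : 0 ≤ sY := by rw [hsY']; linarith
  have hsY1 : sY < 1 := by rw [hsY']; linarith
  have hval : P sY = (sU/2) * (r - 1) := by
    rw [hP, hsY']
    linear_combination (r/4 - 3/4) * hrsq
  have hpos : 0 < P sY := by
    rw [hval]
    have : 0 < sU := by linarith
    nlinarith
  refine ⟨hval, hpos, ?_, ?_⟩
  · by_contra h
    push_neg at h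
    have := cubic_anti sU sI sY hI0 hsY1.le h
    rw [← hP sY, ← hP sI, hIroot] at this
    linarith
  · by_contra h
    push_neg at h
    have hU0 : (0:ℝ) ≤ sU := by linarith
    have := cubic_anti sU sU sI hU0 hI1 h
    rw [← hP sI, ← hP sU, hIroot] at this
    have hPU : P sU = sU * (2*sU - 1) * (sU - 1) := by rw [hP]; ring
    rw [hPU] at this
    nlinarith [mul_pos (mul_pos (show (0:ℝ) < sU by linarith) (show (0:ℝ) < 2*sU - 1 by linarith)) (show (0:ℝ) < 1 - sU by linarith)]
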